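/- Let g: ℝ → ℝ be even, convex, nonconstant (density in volume coordinates). Fix an n-bubble combinatorial type represented by a tuple of volume-coordinate endpoints with prescribed component volumes. If B₁ and B₂ are two equilibrium configurations with the same prescribed volumes, then every point on the segment (1−t)B₁ + tB₂ also has the prescribed volumes, the perimeter function P(t) is convex in t, and B₁ and B₂ have equal perimeter. -/

import Mathlib

open Set

/-- A convex function on `ℝ` has a right derivative at every point, and this right
derivative is at most every forward slope. -/
lemma convex_right_deriv {f : ℝ → ℝ} (hf : ConvexOn ℝ Set.univ f) (x : ℝ) :
    ∃ L, HasDerivWithinAt f L (Set.Ici x) x ∧ ∀ y, x < y → L ≤ slope f x y := by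
  have hmono : MonotoneOn (slope f x) (Ioi x) := by
    intro a ha b hb hab
    rw [slope_def_field, slope_def_field]
    exact hf.secant_mono (mem_univ x) (mem_univ a) (mem_univ b)
      (ne_of_gt ha) (ne_of_gt hb) hab
  have hbdd : BddBelow (slope f x '' Ioi x) := by
    refine ⟨slope f x (x - 1), ?_⟩
    rintro _ ⟨y, hy, rfl⟩
    rw [slope_def_field, slope_def_field]
    exact hf.secant_mono (mem_univ x) (mem_univ (x - 1)) (mem_univ y)
      (by linarith) (ne_of_gt hy) (by linarith [mem_Ioi.1 hy])
  refine ⟨sInf (slope f x '' Ioi x), ?_, fun y hy => csInf_le hbdd ⟨y, hy, rfl⟩⟩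
  rw [hasDerivWithinAt_iff_tendsto_slope, Set.Ici_sdiff_left]
  exact hmono.tendsto_nhdsGT hbdd

/-- Equilibria of a fixed combinatorial type are perimeter minimizing (non-strict
log-convexity): let `g` be even, convex, nonconstant (density in volume coordinates),
represent an `n`-bubble by its tuple of endpoints in volume coordinates, with the
component volumes given by a linear map `vol`. If `B₁` and `B₂` are equilibria with the
same prescribed volumes, then every point of the segment between them has the
prescribed volumes, the perimeter along the segment is convex, and `B₁` and `B₂` have
equal perimeter. Equilibrium means the one-sided derivatives of perimeter along every
volume-preserving direction are `≥ 0` (from the right) and `≤ 0` (from the left). -/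
theorem equilibria_equal_perimeter {k n : ℕ}
    (g : ℝ → ℝ) (hg_even : ∀ v, g (-v) = g v)
    (hg_convex : ConvexOn ℝ Set.univ g) (hg_nonconst : ∃ a b : ℝ, g a ≠ g b)
    (vol : (Fin k → ℝ) →ₗ[ℝ] (Fin n → ℝ))
    (P : (Fin k → ℝ) → ℝ) (hP : ∀ v, P v = ∑ i, g (v i))
    (equilibrium : (Fin k → ℝ) → Prop)
    (hequil : ∀ v, equilibrium v ↔ ∀ d : Fin k → ℝ, vol d = 0 →
      (∀ dR : ℝ, HasDerivWithinAt (fun t : ℝ => P (v + t • d)) dR (Set.Ici 0) 0 →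
        0 ≤ dR) ∧
      (∀ dL : ℝ, HasDerivWithinAt (fun t : ℝ => P (v + t • d)) dL (Set.Iic 0) 0 →
        dL ≤ 0))
    (B₁ B₂ : Fin k → ℝ) (h₁ : equilibrium B₁) (h₂ : equilibrium B₂)
    (hvol : vol B₁ = vol B₂) :
    (∀ t ∈ Set.Icc (0:ℝ) 1, vol ((1 - t) • B₁ + t • B₂) = vol B₁) ∧
      ConvexOn ℝ (Set.Icc (0:ℝ) 1) (fun t => P ((1 - t) • B₁ + t • B₂)) ∧
      P B₁ = P B₂ := by
  -- `P` is convex on all of `ℝᵏ`.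
  have hPconv : ConvexOn ℝ Set.univ P := by
    constructor
    · exact convex_univ
    · intro x _ y _ a b ha hb hab
      rw [hP, hP, hP, Finset.smul_sum, Finset.smul_sum, ← Finset.sum_add_distrib]
      refine Finset.sum_le_sum fun i _ => ?_
      simpa using hg_convex.2 (mem_univ (x i)) (mem_univ (y i)) ha hb hab
  -- Composition with any affine line is convex.
  have hline : ∀ (v d : Fin k → ℝ), ConvexOn ℝ Set.univ (fun t : ℝ => P (v + t • d)) := by
    intro v d
    have := hPconv.comp_affineMap
      (AffineMap.lineMap v (v + d) : ℝ →ᵃ[ℝ] (Fin k → ℝ))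
    simp only [Set.preimage_univ] at this
    refine this.congr fun t _ => ?_
    simp [AffineMap.lineMap_apply, Function.comp]
    abel
  -- One inequality via the equilibrium condition at `w` in direction `v - w`.
  have key : ∀ v w : Fin k → ℝ, equilibrium w → vol v = vol w → P w ≤ P v := by
    intro v w hw hv
    obtain ⟨L, hL, hLs⟩ := convex_right_deriv (hline w (v - w)) 0
    have h0 : (0:ℝ) ≤ L := ((hequil w).1 hw (v - w) (by rw [map_sub, hv, sub_self])).1 L hL
    have h1 := hLs 1 one_pos
    rw [slope_def_field] at h1
    simp only [one_smul, zero_smul, add_zero, add_sub_cancel] at h1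
    have : P w ≤ P v := by
      have h1' : L ≤ P v - P w := by simpa using h1
      linarith
    exact this
  refine ⟨?_, ?_, ?_⟩
  · intro t _
    rw [map_add, map_smul, map_smul, hvol]
    ext i
    simp [Pi.add_apply, Pi.smul_apply]
    ring
  · refine ConvexOn.subset ?_ (subset_univ _) (convex_Icc 0 1)
    have := hline B₁ (B₂ - B₁)
    convert this using 2 with t
    congr 1
    ext i
    simp [Pi.add_apply, Pi.smul_apply, Pi.sub_apply]
    ring
  · exact le_antisymm (key B₂ B₁ h₁ hvol.symm) (key B₁ B₂ h₂ hvol)
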